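/- For any real t with cos(nt) ≠ 1, the sum over j = 1 to n of 1/sin²(t/2 - jπ/n) equals 2n²/(1 - cos(nt)). -/

import Mathlib

open Real

section Aux
open Polynomial Finset

theorem myderiv {R : Type*} [CommRing R] [DecidableEq R] (s : Finset R) :
    derivative (∏ ζ ∈ s, (X - C ζ)) = ∑ ζ ∈ s, ∏ ζ' ∈ s.erase ζ, (X - C ζ') := by
  induction s using Finset.induction_on with
  | empty => simp
  | insert a s ha ih =>
    have key : ∀ b ∈ s, ∏ ζ' ∈ (insert a s).erase b, (X - C ζ') =
        (X - C a) * ∏ ζ' ∈ s.erase b, (X - C ζ') := fun b hb => by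
      rw [Finset.erase_insert_of_ne (by rintro rfl; exact ha hb), Finset.prod_insert
        (fun hmem => ha (Finset.mem_of_mem_erase hmem))]
    rw [Finset.prod_insert ha, derivative_mul, ih, Finset.sum_insert ha,
      Finset.erase_insert ha, Finset.sum_congr rfl key]
    simp only [derivative_sub, derivative_X, derivative_C, sub_zero, one_mul]
    rw [Finset.mul_sum, add_comm]

theorem key_sum (n : ℕ) (hn : 0 < n) (w : ℂ) (hw0 : w ≠ 0) (hw1 : w ^ n ≠ 1) :
    ∑ ζ ∈ nthRootsFinset n (1 : ℂ), ζ * w / (w - ζ) ^ 2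
      = (n : ℂ) ^ 2 * w ^ n / (w ^ n - 1) ^ 2 := by
  classical
  set s := nthRootsFinset n (1 : ℂ) with hs
  obtain ⟨μ, hμ⟩ : ∃ μ : ℂ, IsPrimitiveRoot μ n := ⟨_, Complex.isPrimitiveRoot_exp n hn.ne'⟩
  have hpoly : (X : ℂ[X]) ^ n - 1 = ∏ ζ ∈ s, (X - C ζ) := X_pow_sub_one_eq_prod hn hμ
  -- nonvanishing
  have hne : ∀ ζ ∈ s, w - ζ ≠ 0 := by
    intro ζ hζ hzero
    apply hw1
    rw [show w = ζ by linear_combination hzero, (mem_nthRootsFinset hn 1).mp hζ]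
  -- product formula
  have hQ : ∏ ζ ∈ s, (w - ζ) = w ^ n - 1 := by
    have := congrArg (eval w) hpoly
    simpa [eval_prod] using this.symm
  have hQ0 : w ^ n - 1 ≠ 0 := sub_ne_zero.mpr hw1
  -- first derivative
  have hD1 : ∑ ζ ∈ s, ∏ ζ' ∈ s.erase ζ, (w - ζ') = n * w ^ (n - 1) := by
    have := congrArg (eval w) (congrArg derivative hpoly)
    rw [myderiv] at this
    simpa [eval_prod, eval_finset_sum, derivative_sub, derivative_one, derivative_X_pow]
      using this.symm
  -- erase product
  have herase : ∀ ζ ∈ s, ∏ ζ' ∈ s.erase ζ, (w - ζ') = (w ^ n - 1) / (w - ζ) := by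
    intro ζ hζ
    rw [eq_div_iff (hne ζ hζ), mul_comm, Finset.mul_prod_erase s _ hζ, hQ]
  -- second derivative
  have hD2 : ∑ ζ ∈ s, ∑ ζ' ∈ s.erase ζ, ∏ ζ'' ∈ (s.erase ζ).erase ζ',
      (w - ζ'') = n * (n - 1) * w ^ (n - 2) := by
    have := congrArg (eval w) (congrArg derivative (congrArg derivative hpoly))
    rw [myderiv, derivative_sum] at this
    have h2 : ∀ ζ ∈ s, derivative (∏ ζ' ∈ s.erase ζ, (X - C ζ' : ℂ[X]))
        = ∑ ζ' ∈ s.erase ζ, ∏ ζ'' ∈ (s.erase ζ).erase ζ', (X - C ζ'') := fun ζ _ =>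
      myderiv (s.erase ζ)
    rw [Finset.sum_congr rfl h2] at this
    rw [derivative_sub, derivative_one, derivative_X_pow, sub_zero, derivative_mul,
      derivative_C, derivative_X_pow] at this
    have this2 := this.symm
    simp only [eval_finset_sum, eval_prod, eval_sub, eval_X, eval_C, eval_add, eval_mul,
      eval_pow, eval_zero, zero_mul, zero_add, add_zero] at this2
    rw [this2, Nat.cast_sub hn, Nat.cast_one, show n - 1 - 1 = n - 2 from by omega]
    ring
  -- handle n = 1 separately
  obtain rfl | h2 : n = 1 ∨ 2 ≤ n := by omega
  · have : s = {1} := by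
      ext x
      simp [hs, Polynomial.mem_nthRootsFinset Nat.one_pos (1 : ℂ)]
    rw [this]
    simp
  -- exponent facts
  have e1 : w ^ (n - 1) = w ^ n / w := by
    rw [eq_div_iff hw0, ← pow_succ]; congr 1; omega
  have e2 : w ^ (n - 2) = w ^ n / w ^ 2 := by
    rw [eq_div_iff (pow_ne_zero 2 hw0), ← pow_add]; congr 1; omega
  -- sum of inverses
  have hA : ∑ ζ ∈ s, (w - ζ)⁻¹ = n * w ^ (n - 1) / (w ^ n - 1) := by
    rw [← hD1, Finset.sum_div]
    refine Finset.sum_congr rfl fun ζ hζ => ?_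
    rw [herase ζ hζ, div_right_comm, div_self hQ0, one_div]
  -- off-diagonal double sum
  have hOff : ∑ ζ ∈ s, ∑ ζ' ∈ s.erase ζ, ((w - ζ) * (w - ζ'))⁻¹
      = n * ((n : ℂ) - 1) * w ^ (n - 2) / (w ^ n - 1) := by
    rw [← hD2, Finset.sum_div]
    refine Finset.sum_congr rfl fun ζ hζ => ?_
    rw [Finset.sum_div]
    refine Finset.sum_congr rfl fun ζ' hζ' => ?_
    have h1 : w - ζ' ≠ 0 := hne ζ' (Finset.mem_of_mem_erase hζ')
    have hEE : ∏ ζ'' ∈ (s.erase ζ).erase ζ', (w - ζ'')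
        = (w ^ n - 1) / ((w - ζ) * (w - ζ')) := by
      rw [eq_div_iff (mul_ne_zero (hne ζ hζ) h1)]
      calc (∏ ζ'' ∈ (s.erase ζ).erase ζ', (w - ζ'')) * ((w - ζ) * (w - ζ'))
          = (w - ζ) * ((w - ζ') * ∏ ζ'' ∈ (s.erase ζ).erase ζ', (w - ζ'')) := by ring
        _ = (w - ζ) * ∏ ζ' ∈ s.erase ζ, (w - ζ') := by
            rw [Finset.mul_prod_erase (s.erase ζ) _ hζ']
        _ = ∏ ζ ∈ s, (w - ζ) := Finset.mul_prod_erase s _ hζ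
        _ = w ^ n - 1 := hQ
    rw [hEE, div_right_comm, div_self hQ0, one_div]
  -- sum of squared inverses
  have hB : ∑ ζ ∈ s, ((w - ζ) ^ 2)⁻¹
      = ((n : ℂ) * w ^ (n - 1) / (w ^ n - 1)) ^ 2
        - n * ((n : ℂ) - 1) * w ^ (n - 2) / (w ^ n - 1) := by
    rw [← hA, ← hOff, sq, Finset.sum_mul_sum]
    rw [eq_sub_iff_add_eq, ← Finset.sum_add_distrib]
    refine Finset.sum_congr rfl fun ζ hζ => ?_
    rw [← Finset.add_sum_erase _ _ hζ]
    congr 1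
    · rw [sq, mul_inv]
    · exact Finset.sum_congr rfl fun ζ' _ => by rw [mul_inv]
  -- term rewrite
  have hT : ∑ ζ ∈ s, ζ * w / (w - ζ) ^ 2
      = w ^ 2 * ∑ ζ ∈ s, ((w - ζ) ^ 2)⁻¹ - w * ∑ ζ ∈ s, (w - ζ)⁻¹ := by
    rw [Finset.mul_sum, Finset.mul_sum, ← Finset.sum_sub_distrib]
    refine Finset.sum_congr rfl fun ζ hζ => ?_
    field_simp [hne ζ hζ]
    ring
  rw [hT, hB, hA, e1, e2]
  generalize hW : w ^ n = W at hw1 ⊢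
  have hQ0' : W - 1 ≠ 0 := sub_ne_zero.mpr hw1
  field_simp [hw0, hQ0']
  ring


end Aux

/-- For any real t with cos(nt) ≠ 1, ∑_{j=1}^n 1/sin²(t/2 - jπ/n) = 2n²/(1 - cos(nt)). -/
theorem csc_sq_sum_identity (n : ℕ) (hn : 0 < n) (t : ℝ)
    (h : Real.cos (n * t) ≠ 1) :
    ∑ j ∈ Finset.Icc 1 n, 1 / Real.sin (t / 2 - (j : ℝ) * π / n) ^ 2
      = 2 * (n : ℝ) ^ 2 / (1 - Real.cos (n * t)) := by
  classical
  haveI : NeZero n := ⟨hn.ne'⟩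
  set μ : ℂ := Complex.exp (2 * π * Complex.I / n) with hμdef
  have hμ : IsPrimitiveRoot μ n := Complex.isPrimitiveRoot_exp n hn.ne'
  set w : ℂ := Complex.exp (t * Complex.I) with hwdef
  have hw0 : w ≠ 0 := Complex.exp_ne_zero _
  have hwn : w ^ n = Complex.exp ((n * t : ℝ) * Complex.I) := by
    rw [hwdef, ← Complex.exp_nat_mul]
    congr 1
    push_cast
    ring
  have hw1 : w ^ n ≠ 1 := by
    intro heq
    apply h
    have := congrArg Complex.re heq
    rwa [hwn, Complex.exp_ofReal_mul_I_re] at this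
  have hμ0 : μ ≠ 0 := Complex.exp_ne_zero _
  have hμpow : ∀ j : ℕ, μ ^ j = Complex.exp ((j : ℂ) * (2 * π * Complex.I / n)) := by
    intro j
    rw [hμdef, ← Complex.exp_nat_mul]
  have hne : ∀ j : ℕ, w - μ ^ j ≠ 0 := by
    intro j hzero
    apply hw1
    have : w = μ ^ j := by linear_combination hzero
    rw [this, ← pow_mul, mul_comm, pow_mul, hμ.pow_eq_one, one_pow]
  -- per-term identity
  have hsinsq : ∀ z : ℂ, (Complex.sin z) ^ 2
      = (Complex.exp (2 * z * Complex.I) - 1) ^ 2 / (-4 * Complex.exp (2 * z * Complex.I)) := by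
    intro z
    have ha : Complex.exp (-z * Complex.I) = (Complex.exp (z * Complex.I))⁻¹ := by
      rw [← Complex.exp_neg]; ring_nf
    have hb : Complex.exp (2 * z * Complex.I) = Complex.exp (z * Complex.I) ^ 2 := by
      rw [sq, ← Complex.exp_add]; ring_nf
    have h0 : Complex.exp (z * Complex.I) ≠ 0 := Complex.exp_ne_zero _
    rw [eq_div_iff (by simp [Complex.exp_ne_zero] : (-4 : ℂ) * Complex.exp (2 * z * Complex.I) ≠ 0)]
    rw [Complex.sin, ha, hb]
    have key : ((Complex.exp (z * Complex.I))⁻¹ - Complex.exp (z * Complex.I))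
        * Complex.exp (z * Complex.I) = 1 - Complex.exp (z * Complex.I) ^ 2 := by
      rw [sub_mul, inv_mul_cancel₀ h0, sq]
    calc (((Complex.exp (z * Complex.I))⁻¹ - Complex.exp (z * Complex.I)) * Complex.I / 2) ^ 2
          * (-4 * Complex.exp (z * Complex.I) ^ 2)
        = (((Complex.exp (z * Complex.I))⁻¹ - Complex.exp (z * Complex.I))
            * Complex.exp (z * Complex.I)) ^ 2 * Complex.I ^ 2 * (-1) := by ring
      _ = (Complex.exp (z * Complex.I) ^ 2 - 1) ^ 2 := by rw [key, Complex.I_sq]; ring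
  have hterm : ∀ j ∈ Finset.Icc 1 n,
      ((1 / Real.sin (t / 2 - (j : ℝ) * π / n) ^ 2 : ℝ) : ℂ)
        = -4 * (μ ^ j * w / (w - μ ^ j) ^ 2) := by
    intro j hj
    have hexp : Complex.exp (2 * ((t / 2 - (j : ℝ) * π / n : ℝ) : ℂ) * Complex.I)
        = w * (μ ^ j)⁻¹ := by
      rw [hμpow, hwdef, ← Complex.exp_neg, ← Complex.exp_add]
      congr 1
      have hn0 : ((n : ℂ)) ≠ 0 := Nat.cast_ne_zero.mpr hn.ne'
      push_cast
      field_simp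
      ring
    rw [Complex.ofReal_div, Complex.ofReal_one, Complex.ofReal_pow, Complex.ofReal_sin,
      hsinsq, one_div, inv_div, hexp]
    have hb0 : (μ : ℂ) ^ j ≠ 0 := pow_ne_zero j hμ0
    field_simp [hne j]
  have hmodpow : ∀ j : ℕ, μ ^ j = μ ^ (j % n) := by
    intro j
    conv_lhs => rw [← Nat.div_add_mod j n]
    rw [pow_add, pow_mul, hμ.pow_eq_one, one_pow, one_mul]
  have hLHS : ((∑ j ∈ Finset.Icc 1 n, 1 / Real.sin (t / 2 - (j : ℝ) * π / n) ^ 2 : ℝ) : ℂ)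
      = ∑ ζ ∈ Polynomial.nthRootsFinset n (1 : ℂ), -4 * (ζ * w / (w - ζ) ^ 2) := by
    rw [Complex.ofReal_sum]
    refine Finset.sum_bij (fun j _ => μ ^ j) ?_ ?_ ?_ hterm
    · intro j hj
      refine (Polynomial.mem_nthRootsFinset hn 1).mpr ?_
      rw [← pow_mul, mul_comm, pow_mul, hμ.pow_eq_one, one_pow]
    · intro j hj k hk heq
      simp only [Finset.mem_Icc] at hj hk
      have hmm := hμ.pow_inj (Nat.mod_lt j hn) (Nat.mod_lt k hn)
        (by rw [← hmodpow, ← hmodpow, heq])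
      rcases eq_or_lt_of_le hj.2 with rfl | hjlt
      · rcases eq_or_lt_of_le hk.2 with rfl | hklt
        · rfl
        · rw [Nat.mod_self, Nat.mod_eq_of_lt hklt] at hmm; omega
      · rcases eq_or_lt_of_le hk.2 with rfl | hklt
        · rw [Nat.mod_self, Nat.mod_eq_of_lt hjlt] at hmm; omega
        · rwa [Nat.mod_eq_of_lt hjlt, Nat.mod_eq_of_lt hklt] at hmm
    · intro ζ hζ
      obtain ⟨i, hi, rfl⟩ := hμ.eq_pow_of_pow_eq_one ((Polynomial.mem_nthRootsFinset hn 1).mp hζ)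
      rcases Nat.eq_zero_or_pos i with rfl | hi0
      · exact ⟨n, Finset.mem_Icc.mpr ⟨hn, le_refl n⟩,
          by show μ ^ n = μ ^ 0; rw [hμ.pow_eq_one, pow_zero]⟩
      · exact ⟨i, Finset.mem_Icc.mpr ⟨hi0, hi.le⟩, rfl⟩
  have hW0 : w ^ n ≠ 0 := pow_ne_zero _ hw0
  have hRHS : ((2 * (n : ℝ) ^ 2 / (1 - Real.cos (n * t)) : ℝ) : ℂ)
      = -4 * ((n : ℂ) ^ 2 * w ^ n / (w ^ n - 1) ^ 2) := by
    have hcos : ((Real.cos (n * t) : ℝ) : ℂ) = (w ^ n + (w ^ n)⁻¹) / 2 := by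
      rw [Complex.ofReal_cos, Complex.cos, hwn, ← Complex.exp_neg, neg_mul]
    push_cast [hcos]
    have hD : 1 - (w ^ n + (w ^ n)⁻¹) / 2 = -((w ^ n - 1) ^ 2) / (2 * w ^ n) := by
      field_simp
      ring
    rw [hD]
    have hQ1 : w ^ n - 1 ≠ 0 := sub_ne_zero.mpr hw1
    field_simp
    ring
  apply Complex.ofReal_injective
  rw [hLHS, hRHS, ← Finset.mul_sum, key_sum n hn w hw0 hw1]
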